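/- Comparison of Prüfer angles: under the stated hypotheses, θ₁(x) ≤ θ(x) for all x ∈ [a, b]. -/
import Mathlib


open Real

/-- `sin²` is 1-Lipschitz. -/
lemma sin_sq_lipschitz (u v : ℝ) : |Real.sin u ^ 2 - Real.sin v ^ 2| ≤ |u - v| := by
  have hid : Real.sin u ^ 2 - Real.sin v ^ 2 = Real.sin (u + v) * Real.sin (u - v) := by
    rw [Real.sin_add, Real.sin_sub]
    nlinarith [Real.sin_sq_add_cos_sq u, Real.sin_sq_add_cos_sq v]
  rw [hid, abs_mul]
  calc |Real.sin (u + v)| * |Real.sin (u - v)| ≤ 1 * |u - v| := by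
        exact mul_le_mul (Real.abs_sin_le_one _) (Real.abs_sin_le_abs) (abs_nonneg _)
          zero_le_one
    _ = |u - v| := one_mul _

/-- Comparison of Prüfer angles: if `Q₁ ≤ Q` on `[a,b]` and `θ₁(a) ≤ θ(a)`, then
`θ₁ ≤ θ` on `[a,b]`. -/
theorem prufer_angle_comparison
    (a b : ℝ) (hab : a < b)
    (Q Q₁ : ℝ → ℝ) (hQ : Continuous Q) (hQ₁ : Continuous Q₁)
    (hQle : ∀ x ∈ Set.Icc a b, Q₁ x ≤ Q x)
    (θ θ₁ : ℝ → ℝ)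
    (hθ : ∀ x ∈ Set.Icc a b,
      HasDerivAt θ (Q x * (Real.sin (θ x)) ^ 2 + (Real.cos (θ x)) ^ 2) x)
    (hθ₁ : ∀ x ∈ Set.Icc a b,
      HasDerivAt θ₁ (Q₁ x * (Real.sin (θ₁ x)) ^ 2 + (Real.cos (θ₁ x)) ^ 2) x)
    (hinit : θ₁ a ≤ θ a) :
    ∀ x ∈ Set.Icc a b, θ₁ x ≤ θ x := by
  -- bound on Q
  obtain ⟨M, hM⟩ := (isCompact_Icc (a := a) (b := b)).exists_bound_of_continuousOn
    hQ.continuousOn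
  have hM0 : 0 ≤ M := le_trans (norm_nonneg _) (hM a ⟨le_refl a, hab.le⟩)
  set K : ℝ := M + 1 with hK
  have hK0 : 0 < K := by positivity
  -- the difference function and its derivative
  set g : ℝ → ℝ := fun x => θ₁ x - θ x with hg
  set g' : ℝ → ℝ := fun x =>
    (Q₁ x * (Real.sin (θ₁ x)) ^ 2 + (Real.cos (θ₁ x)) ^ 2)
      - (Q x * (Real.sin (θ x)) ^ 2 + (Real.cos (θ x)) ^ 2) with hg'
  have hgd : ∀ x ∈ Set.Icc a b, HasDerivAt g (g' x) x := fun x hx =>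
    (hθ₁ x hx).sub (hθ x hx)
  -- key differential inequality
  have hb : ∀ x ∈ Set.Icc a b, g' x ≤ K * |g x| := by
    intro x hx
    have h1 : Q₁ x * (Real.sin (θ₁ x)) ^ 2 ≤ Q x * (Real.sin (θ₁ x)) ^ 2 :=
      mul_le_mul_of_nonneg_right (hQle x hx) (sq_nonneg _)
    have h2 : (Real.cos (θ₁ x)) ^ 2 = 1 - (Real.sin (θ₁ x)) ^ 2 := by
      nlinarith [Real.sin_sq_add_cos_sq (θ₁ x)]
    have h3 : (Real.cos (θ x)) ^ 2 = 1 - (Real.sin (θ x)) ^ 2 := by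
      nlinarith [Real.sin_sq_add_cos_sq (θ x)]
    have h4 : g' x ≤ (Q x - 1) * ((Real.sin (θ₁ x)) ^ 2 - (Real.sin (θ x)) ^ 2) := by
      simp only [hg']
      nlinarith
    have h5 : (Q x - 1) * ((Real.sin (θ₁ x)) ^ 2 - (Real.sin (θ x)) ^ 2)
        ≤ |Q x - 1| * |(Real.sin (θ₁ x)) ^ 2 - (Real.sin (θ x)) ^ 2| := by
      calc _ ≤ |(Q x - 1) * ((Real.sin (θ₁ x)) ^ 2 - (Real.sin (θ x)) ^ 2)| := le_abs_self _
        _ = _ := abs_mul _ _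
    have h6 : |Q x - 1| ≤ K := by
      have := hM x hx
      rw [Real.norm_eq_abs] at this
      calc |Q x - 1| ≤ |Q x| + 1 := by
            calc |Q x - 1| ≤ |Q x| + |(1:ℝ)| := abs_sub _ _
              _ = |Q x| + 1 := by rw [abs_one]
        _ ≤ M + 1 := by linarith
    have h7 : |(Real.sin (θ₁ x)) ^ 2 - (Real.sin (θ x)) ^ 2| ≤ |g x| :=
      sin_sq_lipschitz _ _
    calc g' x ≤ |Q x - 1| * |(Real.sin (θ₁ x)) ^ 2 - (Real.sin (θ x)) ^ 2| :=
          le_trans h4 h5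
      _ ≤ K * |g x| := mul_le_mul h6 h7 (abs_nonneg _) hK0.le
  -- continuity of g on [a,b]
  have hgc : ContinuousOn g (Set.Icc a b) := fun x hx =>
    ((hgd x hx).continuousAt).continuousWithinAt
  -- Apply Grönwall to f = max g 0
  set f : ℝ → ℝ := fun x => max (g x) 0 with hf
  set F' : ℝ → ℝ := fun x => if 0 < g x then g' x else 0 with hF'
  have hfc : ContinuousOn f (Set.Icc a b) := hgc.sup continuousOn_const
  have hfa : f a ≤ 0 := by
    simp only [hf, hg]
    simp [sub_nonpos.mpr hinit, max_eq_right]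
  have key : ∀ x ∈ Set.Icc a b, f x ≤ gronwallBound 0 K 0 (x - a) := by
    apply le_gronwallBound_of_liminf_deriv_right_le (f' := F') hfc _ hfa
    · -- bound : F' x ≤ K * f x + 0
      intro x hx
      by_cases hgx : 0 < g x
      · have : F' x = g' x := if_pos hgx
        rw [this]
        have : f x = g x := max_eq_left hgx.le
        rw [this, add_zero]
        calc g' x ≤ K * |g x| := hb x (Set.Ico_subset_Icc_self hx)
          _ = K * g x := by rw [abs_of_pos hgx]
      · have h1 : F' x = 0 := if_neg hgx
        have h2 : f x = 0 := max_eq_right (not_lt.mp hgx)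
        rw [h1, h2]; ring_nf; exact le_refl 0
    · -- liminf condition
      intro x hx r hr
      have hxI : x ∈ Set.Icc a b := Set.Ico_subset_Icc_self hx
      have hslope : Filter.Tendsto (fun z => (z - x)⁻¹ * (g z - g x))
          (nhdsWithin x (Set.Ioi x)) (nhds (g' x)) := by
        have h := hasDerivAt_iff_tendsto_slope.mp (hgd x hxI)
        have hmono : nhdsWithin x (Set.Ioi x) ≤ nhdsWithin x {x}ᶜ :=
          nhdsWithin_mono _ (fun z hz => ne_of_gt hz)
        have := h.mono_left hmono
        refine this.congr (fun z => ?_)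
        simp only [slope_def_field]
        rw [div_eq_inv_mul]
      rcases lt_trichotomy (g x) 0 with hneg | hzero | hpos
      · -- g x < 0 : f is locally 0
        have hFx : F' x = 0 := if_neg (by linarith)
        rw [hFx] at hr
        have hev : ∀ᶠ z in nhdsWithin x (Set.Ioi x), g z < 0 := by
          have : ∀ᶠ z in nhds x, g z < 0 :=
            (hgd x hxI).continuousAt.eventually_lt continuousAt_const hneg
          exact this.filter_mono nhdsWithin_le_nhds
        refine (hev.mono fun z hz => ?_).frequently
        have hfz : f z = 0 := max_eq_right hz.le
        have hfx : f x = 0 := max_eq_right hneg.le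
        rw [hfz, hfx]
        simpa using hr
      · -- g x = 0
        have hFx : F' x = 0 := if_neg (by rw [hzero]; exact lt_irrefl 0)
        rw [hFx] at hr
        have hg'le : g' x ≤ 0 := by
          have := hb x hxI
          rw [hzero, abs_zero, mul_zero] at this
          exact this
        have hev : ∀ᶠ z in nhdsWithin x (Set.Ioi x),
            (z - x)⁻¹ * (g z - g x) < r :=
          hslope.eventually_lt_const (lt_of_le_of_lt hg'le hr)
        have hev2 : ∀ᶠ z in nhdsWithin x (Set.Ioi x), x < z :=
          eventually_mem_nhdsWithin
        refine ((hev.and hev2).mono fun z hz => ?_).frequently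
        obtain ⟨hz1, hz2⟩ := hz
        have hfx : f x = 0 := by rw [hf]; simp [hzero]
        have hzx : (0:ℝ) < (z - x)⁻¹ := inv_pos.mpr (by linarith)
        have : (z - x)⁻¹ * (f z - f x) = max ((z - x)⁻¹ * (g z - g x)) 0 := by
          rw [hfx, sub_zero, hzero, sub_zero] at *
          simp only [hf]
          rw [mul_comm, max_mul_of_nonneg _ _ hzx.le, zero_mul, mul_comm]
        rw [this]
        exact max_lt hz1 hr
      · -- g x > 0 : f = g locally
        have hFx : F' x = g' x := if_pos hpos
        rw [hFx] at hr
        have hev : ∀ᶠ z in nhdsWithin x (Set.Ioi x),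
            (z - x)⁻¹ * (g z - g x) < r := hslope.eventually_lt_const hr
        have hev2 : ∀ᶠ z in nhdsWithin x (Set.Ioi x), 0 < g z := by
          have : ∀ᶠ z in nhds x, 0 < g z :=
            continuousAt_const.eventually_lt (hgd x hxI).continuousAt hpos
          exact this.filter_mono nhdsWithin_le_nhds
        refine ((hev.and hev2).mono fun z hz => ?_).frequently
        obtain ⟨hz1, hz2⟩ := hz
        have hfz : f z = g z := max_eq_left hz2.le
        have hfx : f x = g x := max_eq_left hpos.le
        rw [hfz, hfx]
        exact hz1
  intro x hx
  have := key x hx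
  rw [gronwallBound_ε0_δ0] at this
  have : g x ≤ 0 := le_trans (le_max_left _ _) this
  simpa [hg, sub_nonpos] using this
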